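/- Let p, q, r, s be integers with p > 0 and qs + pr = 1, and let α₁⁰, α₂⁰ be nonzero integers with gcd(α₁⁰,α₂⁰) = 1. Set u := gcd(p, sα₁⁰ − α₂⁰), α := p/u, α₁' := (sα₁⁰ − α₂⁰)/u, α₁ := α·α₁⁰ and α₂ := α·α₂⁰. Then gcd(α₁, α₁') = 1. -/

import Mathlib

/-- In the algorithm constructing a Seifert fibration of `L(p,q)` from coprime
nonzero integers `α₁⁰, α₂⁰`: with `u = gcd(p, sα₁⁰ − α₂⁰)`, `α = p/u`,
`α₁' = (sα₁⁰ − α₂⁰)/u` and `α₁ = α·α₁⁰`, the integers `α₁` and `α₁'` are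
coprime. -/
theorem algorithm_alpha1_coprime (p q r s α₁₀ α₂₀ : ℤ)
    (hp : 0 < p) (hdet : q * s + p * r = 1)
    (hα₁₀ : α₁₀ ≠ 0) (hα₂₀ : α₂₀ ≠ 0) (hcop : Int.gcd α₁₀ α₂₀ = 1)
    (u α α₁' α₁ α₂ : ℤ)
    (hu : u = Int.gcd p (s * α₁₀ - α₂₀))
    (hα : α = p / u)
    (hα₁' : α₁' = (s * α₁₀ - α₂₀) / u)
    (hα₁ : α₁ = α * α₁₀) (hα₂ : α₂ = α * α₂₀) :
    Int.gcd α₁ α₁' = 1 := by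
  have hgpos : 0 < Int.gcd p (s * α₁₀ - α₂₀) := by
    apply Int.gcd_pos_of_ne_zero_left
    exact hp.ne'
  have hu0 : u ≠ 0 := by
    rw [hu]; exact_mod_cast hgpos.ne'
  -- α and α₁' are coprime (dividing by the gcd)
  have h1 : Int.gcd α α₁' = 1 := by
    rw [hα, hα₁', hu]
    exact Int.gcd_div_gcd_div_gcd hgpos
  -- u * α₁' = s*α₁₀ - α₂₀
  have hud : u ∣ s * α₁₀ - α₂₀ := hu ▸ Int.gcd_dvd_right p (s * α₁₀ - α₂₀)
  have heq : u * α₁' = s * α₁₀ - α₂₀ := by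
    rw [hα₁', Int.mul_ediv_cancel' hud]
  -- α₁₀ and α₁' are coprime
  have h2 : IsCoprime α₁₀ α₁' := by
    have hc : IsCoprime α₁₀ α₂₀ := Int.isCoprime_iff_gcd_eq_one.mpr hcop
    obtain ⟨a, b, hab⟩ := hc
    exact ⟨a + b * s, -(b * u), by linear_combination hab - b * heq⟩
  have h3 : IsCoprime α α₁' := Int.isCoprime_iff_gcd_eq_one.mpr h1
  have : IsCoprime (α * α₁₀) α₁' := h3.mul_left h2
  rw [hα₁]
  exact Int.isCoprime_iff_gcd_eq_one.mp this
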